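/- For the edgeless cube Q_L, the basic sequences convergent over the solved configuration f_solved are not closed under concatenation: there exists a basic sequence s that is convergent over f_solved but whose self-concatenation s⌢s is divergent over f_solved. -/

import Mathlib

universe u v

namespace InfRubik

/-- The three axes of the cube. -/
inductive Axis : Type
  | x | y | z
  deriving DecidableEq

/-- The six colors of the Rubik's cube.  A *configuration* is a map from cells to
`Option Color`, where `none` plays the role of the non-color `NaC`. -/
inductive Color : Type
  | red | white | green | orange | yellow | blue
  deriving DecidableEq

/-- The set `L̄† = -L ∪ {0} ∪ L ∪ {±∞}` of extended coordinates. -/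
inductive ExtCoord (L : Type u) : Type u
  | neg : L → ExtCoord L
  | zero : ExtCoord L
  | pos : L → ExtCoord L
  | negInf : ExtCoord L
  | posInf : ExtCoord L

namespace ExtCoord

variable {L : Type u}

/-- The reflection `r ↦ -r`. -/
def reflect : ExtCoord L → ExtCoord L
  | .neg r => .pos r
  | .zero => .zero
  | .pos r => .neg r
  | .negInf => .posInf
  | .posInf => .negInf

@[simp] theorem reflect_reflect (a : ExtCoord L) : a.reflect.reflect = a := by
  cases a <;> rfl

/-- Whether a coordinate is `±∞`. -/
def isInfB : ExtCoord L → Bool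
  | .negInf => true
  | .posInf => true
  | _ => false

@[simp] theorem isInfB_reflect (a : ExtCoord L) : a.reflect.isInfB = a.isInfB := by
  cases a <;> rfl

/-- Whether a coordinate is `0`. -/
def isZeroB : ExtCoord L → Bool
  | .zero => true
  | _ => false

@[simp] theorem isZeroB_reflect (a : ExtCoord L) : a.reflect.isZeroB = a.isZeroB := by
  cases a <;> rfl

end ExtCoord

/-- A point of the ambient space `L̄† × L̄† × L̄†`. -/
abbrev Triple (L : Type u) := ExtCoord L × ExtCoord L × ExtCoord L

/-- The coordinate of a point along an axis. -/
def Triple.coord {L : Type u} : Axis → Triple L → ExtCoord L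
  | .x, p => p.1
  | .y, p => p.2.1
  | .z, p => p.2.2

/-- Quarter-turn rotation of the ambient space about an axis (right-hand rule). -/
def rot {L : Type u} : Axis → Triple L → Triple L
  | .x, p => (p.1, p.2.2.reflect, p.2.1)
  | .y, p => (p.2.2, p.2.1, p.1.reflect)
  | .z, p => (p.2.1.reflect, p.1, p.2.2)

/-- Inverse quarter-turn rotation of the ambient space about an axis. -/
def rotInv {L : Type u} : Axis → Triple L → Triple L
  | .x, p => (p.1, p.2.2, p.2.1.reflect)
  | .y, p => (p.2.2.reflect, p.2.1, p.1)
  | .z, p => (p.2.1, p.1.reflect, p.2.2)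

@[simp] theorem rotInv_rot {L : Type u} (i : Axis) (p : Triple L) : rotInv i (rot i p) = p := by
  cases i <;> simp [rot, rotInv]

@[simp] theorem rot_rotInv {L : Type u} (i : Axis) (p : Triple L) : rot i (rotInv i p) = p := by
  cases i <;> simp [rot, rotInv]

/-- The number of infinite coordinates of a point. -/
def infCount {L : Type u} (p : Triple L) : ℕ :=
  (if p.1.isInfB then 1 else 0) + (if p.2.1.isInfB then 1 else 0) +
    (if p.2.2.isInfB then 1 else 0)

/-- The number of zero coordinates of a point. -/
def zeroCount {L : Type u} (p : Triple L) : ℕ :=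
  (if p.1.isZeroB then 1 else 0) + (if p.2.1.isZeroB then 1 else 0) +
    (if p.2.2.isZeroB then 1 else 0)

theorem infCount_rot {L : Type u} (i : Axis) (p : Triple L) : infCount (rot i p) = infCount p := by
  obtain ⟨a, b, c⟩ := p
  cases i <;> cases a <;> cases b <;> cases c <;> rfl

theorem infCount_rotInv {L : Type u} (i : Axis) (p : Triple L) :
    infCount (rotInv i p) = infCount p := by
  obtain ⟨a, b, c⟩ := p
  cases i <;> cases a <;> cases b <;> cases c <;> rfl

@[simp] theorem coord_rot_self {L : Type u} (i : Axis) (p : Triple L) :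
    (rot i p).coord i = p.coord i := by
  cases i <;> rfl

@[simp] theorem coord_rotInv_self {L : Type u} (i : Axis) (p : Triple L) :
    (rotInv i p).coord i = p.coord i := by
  cases i <;> rfl

/-- A cell of the *edgeless* cube `Q_L`: a point of the ambient space with exactly one
infinite coordinate. -/
def Cell (L : Type u) : Type u := {p : Triple L // infCount p = 1}

open Classical in
/-- The underlying map on points of the quarter-turn twist `T_{i,α}`. -/
noncomputable def qtTriple {L : Type u} (i : Axis) (α : ExtCoord L) (p : Triple L) : Triple L :=
  if p.coord i = α then rot i p else p

open Classical in
/-- The underlying map on points of the inverse quarter-turn twist `T_{i,α}⁻¹`. -/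
noncomputable def qtTripleInv {L : Type u} (i : Axis) (α : ExtCoord L) (p : Triple L) : Triple L :=
  if p.coord i = α then rotInv i p else p

theorem qtTripleInv_qtTriple {L : Type u} (i : Axis) (α : ExtCoord L) (p : Triple L) :
    qtTripleInv i α (qtTriple i α p) = p := by
  classical
  by_cases h : p.coord i = α <;> simp [qtTriple, qtTripleInv, h]

theorem qtTriple_qtTripleInv {L : Type u} (i : Axis) (α : ExtCoord L) (p : Triple L) :
    qtTriple i α (qtTripleInv i α p) = p := by
  classical
  by_cases h : p.coord i = α <;> simp [qtTriple, qtTripleInv, h]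

theorem infCount_qtTriple {L : Type u} (i : Axis) (α : ExtCoord L) (p : Triple L) :
    infCount (qtTriple i α p) = infCount p := by
  classical
  by_cases h : p.coord i = α <;> simp [qtTriple, h, infCount_rot]

theorem infCount_qtTripleInv {L : Type u} (i : Axis) (α : ExtCoord L) (p : Triple L) :
    infCount (qtTripleInv i α p) = infCount p := by
  classical
  by_cases h : p.coord i = α <;> simp [qtTripleInv, h, infCount_rotInv]

/-- The quarter-turn twist `T_{i,α}` of the edgeless cube, as a permutation of cells. -/
noncomputable def quarterTurn {L : Type u} (i : Axis) (α : ExtCoord L) : Equiv.Perm (Cell L) where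
  toFun c := ⟨qtTriple i α c.1, by rw [infCount_qtTriple]; exact c.2⟩
  invFun c := ⟨qtTripleInv i α c.1, by rw [infCount_qtTripleInv]; exact c.2⟩
  left_inv c := Subtype.ext (qtTripleInv_qtTriple i α c.1)
  right_inv c := Subtype.ext (qtTriple_qtTripleInv i α c.1)

/-- The basic twists of the edgeless cube: quarter turns, half turns and reverse
quarter turns of a single layer. -/
def IsBasic (L : Type u) (π : Equiv.Perm (Cell L)) : Prop :=
  ∃ (i : Axis) (α : ExtCoord L),
    π = quarterTurn i α ∨ π = quarterTurn i α ^ 2 ∨ π = (quarterTurn i α)⁻¹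

/-! ### The edged cube -/

/-- How a quarter-turn about axis `i` transports the face tag of a cell. -/
def tagMap : Axis → Axis → Axis
  | .x, .x => .x
  | .x, .y => .z
  | .x, .z => .y
  | .y, .x => .z
  | .y, .y => .y
  | .y, .z => .x
  | .z, .x => .y
  | .z, .y => .x
  | .z, .z => .z

@[simp] theorem tagMap_tagMap (i j : Axis) : tagMap i (tagMap i j) = j := by
  cases i <;> cases j <;> rfl

theorem isInfB_coord_tagMap_rot {L : Type u} (i j : Axis) (p : Triple L) :
    ((rot i p).coord (tagMap i j)).isInfB = (p.coord j).isInfB := by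
  cases i <;> cases j <;> simp [rot, Triple.coord, tagMap]

theorem isInfB_coord_tagMap_rotInv {L : Type u} (i j : Axis) (p : Triple L) :
    ((rotInv i p).coord (tagMap i j)).isInfB = (p.coord j).isInfB := by
  cases i <;> cases j <;> simp [rotInv, Triple.coord, tagMap]

/-- A cell of the *edged* cube `Q̄_L`: a point of the ambient space together with a tag
naming an axis, such that the coordinate along the tagged axis is infinite (the tag
indicates the face to which the cell belongs). -/
def ECell (L : Type u) : Type u := {q : Triple L × Axis // (q.1.coord q.2).isInfB = true}

open Classical in
/-- The underlying map of the quarter-turn twist `T_{i,α}` of the edged cube. -/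
noncomputable def eqtFun {L : Type u} (i : Axis) (α : ExtCoord L) (q : Triple L × Axis) :
    Triple L × Axis :=
  if q.1.coord i = α then (rot i q.1, tagMap i q.2) else q

open Classical in
/-- The underlying map of the reverse quarter-turn twist of the edged cube. -/
noncomputable def eqtFunInv {L : Type u} (i : Axis) (α : ExtCoord L) (q : Triple L × Axis) :
    Triple L × Axis :=
  if q.1.coord i = α then (rotInv i q.1, tagMap i q.2) else q

theorem eqtFunInv_eqtFun {L : Type u} (i : Axis) (α : ExtCoord L) (q : Triple L × Axis) :
    eqtFunInv i α (eqtFun i α q) = q := by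
  classical
  by_cases h : q.1.coord i = α <;> simp [eqtFun, eqtFunInv, h]

theorem eqtFun_eqtFunInv {L : Type u} (i : Axis) (α : ExtCoord L) (q : Triple L × Axis) :
    eqtFun i α (eqtFunInv i α q) = q := by
  classical
  by_cases h : q.1.coord i = α <;> simp [eqtFun, eqtFunInv, h]

theorem isInfB_eqtFun {L : Type u} (i : Axis) (α : ExtCoord L) (q : Triple L × Axis) :
    (((eqtFun i α q).1.coord (eqtFun i α q).2)).isInfB = ((q.1.coord q.2)).isInfB := by
  classical
  by_cases h : q.1.coord i = α <;> simp [eqtFun, h, isInfB_coord_tagMap_rot]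

theorem isInfB_eqtFunInv {L : Type u} (i : Axis) (α : ExtCoord L) (q : Triple L × Axis) :
    (((eqtFunInv i α q).1.coord (eqtFunInv i α q).2)).isInfB = ((q.1.coord q.2)).isInfB := by
  classical
  by_cases h : q.1.coord i = α <;> simp [eqtFunInv, h, isInfB_coord_tagMap_rotInv]

/-- The quarter-turn twist `T_{i,α}` of the edged cube, as a permutation of cells.  A face
twist moves, besides the cells of its face, also the coupled edge and corner cells of the
adjacent faces lying in the twisted layer. -/
noncomputable def equarterTurn {L : Type u} (i : Axis) (α : ExtCoord L) :
    Equiv.Perm (ECell L) where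
  toFun c := ⟨eqtFun i α c.1, by rw [isInfB_eqtFun]; exact c.2⟩
  invFun c := ⟨eqtFunInv i α c.1, by rw [isInfB_eqtFunInv]; exact c.2⟩
  left_inv c := Subtype.ext (eqtFunInv_eqtFun i α c.1)
  right_inv c := Subtype.ext (eqtFun_eqtFunInv i α c.1)

/-- The basic twists of the edged cube. -/
def IsEBasic (L : Type u) (π : Equiv.Perm (ECell L)) : Prop :=
  ∃ (i : Axis) (α : ExtCoord L),
    π = equarterTurn i α ∨ π = equarterTurn i α ^ 2 ∨ π = (equarterTurn i α)⁻¹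

/-! ### Transfinite sequences of twists and their action on labellings -/

open Classical in
/-- The eventual value of an ordinal-indexed family of `Option`-values: `some v` if the family
stabilizes on `some v` before `lam`, and `none` otherwise. -/
noncomputable def eventualVal {X : Type u} (lam : Ordinal.{v})
    (g : ∀ η, η < lam → Option X) : Option X :=
  if h : ∃ v : X, ∃ γ, γ < lam ∧ ∀ η (hη : η < lam), γ ≤ η → g η hη = some v
  then some h.choose else none

/-- Applying an ordinal-indexed sequence of permutations to an initial labelling:
`run σ f0 θ` is the labelling obtained after the first `θ` moves, with
`f_{η+1}(c) = f_η(σ_η⁻¹ c)` at successors and the eventual value (or `NaC = none`)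
at limits. -/
noncomputable def run {Cl : Type v} {X : Type u} (σ : Ordinal.{v} → Equiv.Perm Cl)
    (f0 : Cl → Option X) (θ : Ordinal.{v}) : Cl → Option X :=
  Ordinal.limitRecOn (motive := fun _ => Cl → Option X) θ f0
    (fun η fη c => fη ((σ η)⁻¹ c))
    (fun lam _ prev c => eventualVal lam (fun η h => prev η h c))

/-- A (transfinite) sequence of twists of length `len`, each of which satisfies the
predicate `B` (being a basic twist). -/
structure TwistSeq (Cl : Type v) (B : Equiv.Perm Cl → Prop) : Type (v + 1) where
  len : Ordinal.{v}
  seq : Ordinal.{v} → Equiv.Perm Cl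
  basic : ∀ η, η < len → B (seq η)

namespace TwistSeq

variable {Cl : Type v} {B : Equiv.Perm Cl → Prop}

/-- The terminal labelling obtained by applying a sequence of twists to `f0`. -/
noncomputable def terminal (s : TwistSeq Cl B) {X : Type u} (f0 : Cl → Option X) :
    Cl → Option X :=
  run s.seq f0 s.len

/-- A sequence of twists is convergent over `f0` if the terminal labelling is legal,
i.e. never takes the value `NaC = none`. -/
def ConvOver (s : TwistSeq Cl B) {X : Type u} (f0 : Cl → Option X) : Prop :=
  ∀ c, s.terminal f0 c ≠ none

/-- A sequence of twists is universally convergent if it is convergent over the identity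
labelling. -/
def UnivConv (s : TwistSeq Cl B) : Prop := s.ConvOver (fun c => some c)

/-- A sequence is twist-finite if each twist occurs in it only finitely many times. -/
def TwistFinite (s : TwistSeq Cl B) : Prop :=
  ∀ π : Equiv.Perm Cl, {η : Ordinal | η < s.len ∧ s.seq η = π}.Finite

/-- Two sequences are equivalent, `σ⃗ ∼ τ⃗`, when they produce the same terminal
configuration over every initial configuration. -/
def Sim (s t : TwistSeq Cl B) : Prop :=
  ∀ f : Cl → Option Color, s.terminal f = t.terminal f

/-- Concatenation of twist sequences: `s.concat t` performs `s` and then `t`. -/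
noncomputable def concat (s t : TwistSeq Cl B) : TwistSeq Cl B where
  len := s.len + t.len
  seq := fun η => if η < s.len then s.seq η else t.seq (η - s.len)
  basic := by
    intro η hη
    by_cases h : η < s.len
    · simpa [h] using s.basic η h
    · have hc : 0 < t.len := by
        rcases eq_zero_or_pos t.len with h0 | h0
        · rw [h0, add_zero] at hη; exact absurd hη h
        · exact h0
      have h2 : η - s.len < t.len := Ordinal.sub_lt_of_lt_add hη hc
      simpa [h] using t.basic _ h2

/-- The empty sequence of twists. -/
def empty (Cl : Type v) (B : Equiv.Perm Cl → Prop) : TwistSeq Cl B where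
  len := 0
  seq := fun _ => 1
  basic := fun η hη => absurd hη (by simp)

/-- `n`-fold self-concatenation of a sequence of twists. -/
noncomputable def npow (s : TwistSeq Cl B) : ℕ → TwistSeq Cl B
  | 0 => empty Cl B
  | n + 1 => (npow s n).concat s

end TwistSeq

/-- Basic sequences of twists of the edgeless cube `Q_L`. -/
abbrev BasicSeq (L : Type u) := TwistSeq (Cell L) (IsBasic L)

/-- Basic sequences of twists of the edged cube `Q̄_L`. -/
abbrev EBasicSeq (L : Type u) := TwistSeq (ECell L) (IsEBasic L)

/-- `f` is accessible from `f0` when some basic sequence applied to `f0` is convergent with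
terminal configuration `f`. -/
def Accessible {Cl : Type v} (B : Equiv.Perm Cl → Prop) (f0 f : Cl → Option Color) : Prop :=
  ∃ s : TwistSeq Cl B, s.ConvOver f0 ∧ s.terminal f0 = f

/-- A labelling is legal if it never takes the value `NaC = none`. -/
def IsLegal {Cl : Type v} {X : Type u} (f : Cl → Option X) : Prop := ∀ c, f c ≠ none

/-! ### Clusters, faces, and distinguished configurations -/

/-- The group of permutations of cells of the edgeless cube generated by the basic twists. -/
def twistGroup (L : Type u) : Subgroup (Equiv.Perm (Cell L)) :=
  Subgroup.closure {π | IsBasic L π}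

/-- The cluster of a cell of the edgeless cube: its orbit under the group generated by the
basic twists. -/
def cluster {L : Type u} (c : Cell L) : Set (Cell L) :=
  {d | ∃ g ∈ twistGroup L, g c = d}

/-- The group of permutations of cells of the edged cube generated by the basic twists. -/
def etwistGroup (L : Type u) : Subgroup (Equiv.Perm (ECell L)) :=
  Subgroup.closure {π | IsEBasic L π}

/-- The cluster of a cell of the edged cube. -/
def ecluster {L : Type u} (c : ECell L) : Set (ECell L) :=
  {d | ∃ g ∈ etwistGroup L, g c = d}

open Classical in
/-- The solved configuration of the edgeless cube: each face gets one of six distinct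
colors. -/
noncomputable def fSolved (L : Type u) : Cell L → Option Color := fun c =>
  if c.1.1 = ExtCoord.posInf then some .red
  else if c.1.1 = ExtCoord.negInf then some .orange
  else if c.1.2.1 = ExtCoord.posInf then some .blue
  else if c.1.2.1 = ExtCoord.negInf then some .green
  else if c.1.2.2 = ExtCoord.posInf then some .white
  else some .yellow

/-- The color of each face: the face is named by the axis and the sign (`true` = `+∞`). -/
def faceColor : Axis → Bool → Color
  | .x, true => .red
  | .x, false => .orange
  | .y, true => .blue
  | .y, false => .green
  | .z, true => .white
  | .z, false => .yellow

open Classical in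
/-- The solved configuration of the edged cube. -/
noncomputable def efSolved (L : Type u) : ECell L → Option Color := fun c =>
  if c.1.1.coord c.1.2 = ExtCoord.posInf then some (faceColor c.1.2 true)
  else some (faceColor c.1.2 false)

/-- A center cell of the edgeless cube: two of its coordinates are `0`. -/
def IsCenter {L : Type u} (c : Cell L) : Prop := zeroCount c.1 = 2

/-- The global rotation of the whole cube about an axis, as a permutation of the cells of
the edgeless cube. -/
def rotAllPerm {L : Type u} (i : Axis) : Equiv.Perm (Cell L) where
  toFun c := ⟨rot i c.1, by rw [infCount_rot]; exact c.2⟩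
  invFun c := ⟨rotInv i c.1, by rw [infCount_rotInv]; exact c.2⟩
  left_inv c := Subtype.ext (rotInv_rot i c.1)
  right_inv c := Subtype.ext (rot_rotInv i c.1)

/-- The group of global rotations of the edgeless cube. -/
def rotGroup (L : Type u) : Subgroup (Equiv.Perm (Cell L)) :=
  Subgroup.closure (Set.range (rotAllPerm (L := L)))

/-- A configuration of the edgeless cube is standard if every non-center cluster contains
exactly four cells of each of the six colors, and its restriction to the center cluster is
obtained from the solved configuration by a global rotation of the cube. -/
def Standard {L : Type u} (f : Cell L → Option Color) : Prop :=
  (∀ c : Cell L, ¬IsCenter c → ∀ γ : Color, {d ∈ cluster c | f d = some γ}.ncard = 4) ∧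
  ∃ g ∈ rotGroup L, ∀ d : Cell L, IsCenter d → f d = fSolved L (g⁻¹ d)

/-- A configuration is invariant under all quarter-turn face twists. -/
def FaceInvariant {L : Type u} (f : Cell L → Option Color) : Prop :=
  ∀ (i : Axis) (α : ExtCoord L), α.isInfB = true →
    ∀ c : Cell L, f ((quarterTurn i α)⁻¹ c) = f c

/-! ### Quadrants and cluster configurations -/

/-- The upper-right quadrant `D` of the Front face: the cells `(x, y, +∞)` with `x ∈ L`
and `y ∈ {0} ∪ L`; every non-center cluster has a unique representative in `D`. -/
def Dset (L : Type u) : Set (Cell L) :=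
  {c | ∃ (a : L) (b : ExtCoord L), (b = ExtCoord.zero ∨ ∃ r : L, b = ExtCoord.pos r) ∧
    c.1 = (ExtCoord.pos a, b, ExtCoord.posInf)}

/-- Two cells lie in the same face quadrant (an image of `D` under a global rotation). -/
def SameQuadrant {L : Type u} (d d' : Cell L) : Prop :=
  ∃ g ∈ rotGroup L, d ∈ (fun c => g c) '' Dset L ∧ d' ∈ (fun c => g c) '' Dset L

/-! ### Coupled cells of the edged cube -/

/-- Two cells of the edged cube are coupled if they occupy the same location but belong to
different faces (they are parts of a common edge or corner cubie). -/
def Coupled {L : Type u} (c c' : ECell L) : Prop := c.1.1 = c'.1.1 ∧ c.1.2 ≠ c'.1.2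

/-- An edge cell: exactly two infinite coordinates. -/
def IsEdgeCell {L : Type u} (c : ECell L) : Prop := infCount c.1.1 = 2

/-- A corner cell: three infinite coordinates. -/
def IsCornerCell {L : Type u} (c : ECell L) : Prop := infCount c.1.1 = 3

/-- An edge-cross cell: an edge cell one of whose coordinates is `0`. -/
def IsEdgeCross {L : Type u} (c : ECell L) : Prop :=
  IsEdgeCell c ∧ 0 < zeroCount c.1.1

end InfRubik
namespace InfRubik

section Aux

open Ordinal Order

variable {L : Type u}

theorem run_zero {Cl : Type v} {X : Type u} (σ : Ordinal.{v} → Equiv.Perm Cl)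
    (f0 : Cl → Option X) : run σ f0 0 = f0 := by
  unfold run; rw [Ordinal.limitRecOn_zero]

theorem run_succ {Cl : Type v} {X : Type u} (σ : Ordinal.{v} → Equiv.Perm Cl)
    (f0 : Cl → Option X) (η : Ordinal.{v}) :
    run σ f0 (Order.succ η) = fun c => run σ f0 η ((σ η)⁻¹ c) := by
  unfold run; rw [Ordinal.limitRecOn_succ]

theorem run_limit {Cl : Type v} {X : Type u} (σ : Ordinal.{v} → Equiv.Perm Cl)
    (f0 : Cl → Option X) {lam : Ordinal.{v}} (h : Order.IsSuccLimit lam) :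
    run σ f0 lam = fun c => eventualVal lam (fun η _ => run σ f0 η c) := by
  unfold run; rw [Ordinal.limitRecOn_limit _ _ _ _ h]

theorem eventualVal_const {X : Type u} {lam : Ordinal.{v}} (h0 : 0 < lam) (v : X)
    (g : ∀ η, η < lam → Option X) (hg : ∀ η hη, g η hη = some v) :
    eventualVal lam g = some v := by
  have hex : ∃ w : X, ∃ γ, γ < lam ∧ ∀ η (hη : η < lam), γ ≤ η → g η hη = some w :=
    ⟨v, 0, h0, fun η hη _ => hg η hη⟩
  rw [eventualVal, dif_pos hex]
  obtain ⟨γ, hγ, hall⟩ := hex.choose_spec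
  have h1 := hall γ hγ le_rfl
  rw [hg γ hγ] at h1
  rw [Option.some_inj.mp h1]

theorem eventualVal_none {X : Type u} {lam : Ordinal.{v}}
    (g : ∀ η, η < lam → Option X)
    (h : ∀ (v : X) γ, γ < lam → ∃ η hη, γ ≤ η ∧ g η hη ≠ some v) :
    eventualVal lam g = none := by
  rw [eventualVal, dif_neg]
  rintro ⟨v, γ, hγ, hall⟩
  obtain ⟨η, hη, hle, hne⟩ := h v γ hγ
  exact hne (hall η hη hle)

theorem fSolved_ne_none (c : Cell L) : fSolved L c ≠ none := by
  rw [fSolved]; split_ifs <;> simp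

theorem qt_inv_apply (i : Axis) (α : ExtCoord L) (c : Cell L) :
    (((quarterTurn i α)⁻¹ : Equiv.Perm (Cell L)) c).1 = qtTripleInv i α c.1 := rfl

theorem qtTripleInv_pos {i : Axis} {α : ExtCoord L} {p : Triple L} (h : p.coord i = α) :
    qtTripleInv i α p = rotInv i p := by rw [qtTripleInv, if_pos h]

theorem qtTripleInv_neg {i : Axis} {α : ExtCoord L} {p : Triple L} (h : ¬ p.coord i = α) :
    qtTripleInv i α p = p := by rw [qtTripleInv, if_neg h]

theorem notInf_of_top (c : Cell L) (h : c.1.2.2.isInfB = true) :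
    c.1.1.isInfB = false ∧ c.1.2.1.isInfB = false := by
  have h2 := c.2
  rw [infCount, h] at h2
  cases hx : c.1.1.isInfB <;> cases hy : c.1.2.1.isInfB <;> simp [hx, hy] at h2 ⊢

theorem isInfB_false_ne {a : ExtCoord L} (h : a.isInfB = false) :
    a ≠ ExtCoord.posInf ∧ a ≠ ExtCoord.negInf := by
  cases a <;> simp_all [ExtCoord.isInfB]

theorem fSolved_top (c : Cell L) (h : c.1.2.2 = ExtCoord.posInf) :
    fSolved L c = some Color.white := by
  have hz : c.1.2.2.isInfB = true := by rw [h]; rfl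
  obtain ⟨hx, hy⟩ := notInf_of_top c hz
  obtain ⟨hx1, hx2⟩ := isInfB_false_ne hx
  obtain ⟨hy1, hy2⟩ := isInfB_false_ne hy
  rw [fSolved]
  rw [if_neg hx1, if_neg hx2, if_neg hy1, if_neg hy2, if_pos h]

theorem fSolved_qzinv (c : Cell L) :
    fSolved L ((quarterTurn Axis.z ExtCoord.posInf)⁻¹ c) = fSolved L c := by
  by_cases h : c.1.2.2 = ExtCoord.posInf
  · have hc : ((quarterTurn Axis.z ExtCoord.posInf)⁻¹ c).1.2.2 = ExtCoord.posInf := by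
      rw [qt_inv_apply, qtTripleInv_pos (show c.1.coord Axis.z = _ from h)]
      exact h
    rw [fSolved_top _ hc, fSolved_top _ h]
  · have hc : ((quarterTurn Axis.z ExtCoord.posInf)⁻¹ c) = c := by
      apply Subtype.ext
      rw [qt_inv_apply, qtTripleInv_neg (show ¬ c.1.coord Axis.z = _ from h)]
    rw [hc]

/-- The half turn of the top face. -/
noncomputable def Hseq (L : Type u) : Equiv.Perm (Cell L) :=
  quarterTurn Axis.z ExtCoord.posInf ^ 2

theorem Hinv_apply (c : Cell L) :
    (Hseq L)⁻¹ c =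
      (quarterTurn Axis.z ExtCoord.posInf)⁻¹ ((quarterTurn Axis.z ExtCoord.posInf)⁻¹ c) := by
  rw [Hseq, pow_two, mul_inv_rev, Equiv.Perm.mul_apply]

theorem fSolved_Hinv (c : Cell L) : fSolved L ((Hseq L)⁻¹ c) = fSolved L c := by
  rw [Hinv_apply, fSolved_qzinv, fSolved_qzinv]

/-- The breaking quarter turn. -/
noncomputable def tauP (a : L) : Equiv.Perm (Cell L) :=
  quarterTurn Axis.y (ExtCoord.pos a)

/-- The alternating cells. -/
def cell0 (a : L) : Cell L :=
  ⟨(ExtCoord.zero, ExtCoord.pos a, ExtCoord.posInf), by simp [infCount, ExtCoord.isInfB]⟩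

def cell1 (a : L) : Cell L :=
  ⟨(ExtCoord.zero, ExtCoord.neg a, ExtCoord.posInf), by simp [infCount, ExtCoord.isInfB]⟩

theorem Hinv_cell0 (a : L) : (Hseq L)⁻¹ (cell0 a) = cell1 a := by
  rw [Hinv_apply]
  apply Subtype.ext
  rw [qt_inv_apply, qt_inv_apply]
  rw [qtTripleInv_pos (show (cell0 a).1.coord Axis.z = ExtCoord.posInf from rfl)]
  rw [show rotInv Axis.z (cell0 a).1
      = ((ExtCoord.pos a : ExtCoord L), (ExtCoord.zero : ExtCoord L),
          (ExtCoord.posInf : ExtCoord L)) from rfl]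
  rw [qtTripleInv_pos (show Triple.coord Axis.z
      ((ExtCoord.pos a : ExtCoord L), (ExtCoord.zero : ExtCoord L),
        (ExtCoord.posInf : ExtCoord L)) = ExtCoord.posInf from rfl)]
  rfl

theorem Hinv_cell1 (a : L) : (Hseq L)⁻¹ (cell1 a) = cell0 a := by
  rw [Hinv_apply]
  apply Subtype.ext
  rw [qt_inv_apply, qt_inv_apply]
  rw [qtTripleInv_pos (show (cell1 a).1.coord Axis.z = ExtCoord.posInf from rfl)]
  rw [show rotInv Axis.z (cell1 a).1
      = ((ExtCoord.neg a : ExtCoord L), (ExtCoord.zero : ExtCoord L),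
          (ExtCoord.posInf : ExtCoord L)) from rfl]
  rw [qtTripleInv_pos (show Triple.coord Axis.z
      ((ExtCoord.neg a : ExtCoord L), (ExtCoord.zero : ExtCoord L),
        (ExtCoord.posInf : ExtCoord L)) = ExtCoord.posInf from rfl)]
  rfl

theorem fSolved_tauInv_cell0 (a : L) :
    fSolved L ((tauP a)⁻¹ (cell0 a)) = some Color.orange := by
  have h1 : ((tauP a)⁻¹ (cell0 a)).1
      = ((ExtCoord.negInf : ExtCoord L), (ExtCoord.pos a : ExtCoord L),
          (ExtCoord.zero : ExtCoord L)) := by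
    rw [tauP, qt_inv_apply, qtTripleInv_pos (show (cell0 a).1.coord Axis.y = ExtCoord.pos a from rfl)]
    rfl
  rw [fSolved, h1]
  simp

theorem fSolved_tauInv_cell1 (a : L) :
    fSolved L ((tauP a)⁻¹ (cell1 a)) = some Color.white := by
  have h1 : (tauP a)⁻¹ (cell1 a) = cell1 a := by
    apply Subtype.ext
    rw [tauP, qt_inv_apply, qtTripleInv_neg]
    simp [cell1, Triple.coord]
  rw [h1]
  exact fSolved_top _ rfl

end Aux

end InfRubik

open InfRubik in
/-- On the edgeless cube, the basic sequences convergent over the solved configuration are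
not closed under concatenation: some such sequence has divergent self-concatenation. -/
theorem conv_not_closed_concat {L : Type u} [Infinite L] :
    ∃ s : BasicSeq L, s.ConvOver (fSolved L) ∧ ¬ (s.concat s).ConvOver (fSolved L) := by
  classical
  obtain ⟨a⟩ : Nonempty L := inferInstance
  have hb : ∀ η : Ordinal.{u}, η < Ordinal.omega0 + 1 →
      IsBasic L (if η < Ordinal.omega0 then Hseq L else tauP a) := by
    intro η _
    by_cases h : η < Ordinal.omega0
    · rw [if_pos h]; exact ⟨Axis.z, ExtCoord.posInf, Or.inr (Or.inl rfl)⟩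
    · rw [if_neg h]; exact ⟨Axis.y, ExtCoord.pos a, Or.inl rfl⟩
  have key : ∀ σ : Ordinal.{u} → Equiv.Perm (Cell L), (∀ η < Ordinal.omega0, σ η = Hseq L) →
      ∀ n : ℕ, run σ (fSolved L) (n : Ordinal) = fSolved L := by
    intro σ hσ n
    induction n with
    | zero => simpa using run_zero σ (fSolved L)
    | succ n ih =>
      have h1 : ((n + 1 : ℕ) : Ordinal.{u}) = Order.succ (n : Ordinal) := by
        rw [Nat.cast_add, Nat.cast_one, Ordinal.add_one_eq_succ]
      rw [h1, run_succ, hσ n (Ordinal.nat_lt_omega0 n)]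
      funext c
      show run σ (fSolved L) (n : Ordinal) ((Hseq L)⁻¹ c) = fSolved L c
      rw [ih]
      exact fSolved_Hinv c
  have keyω : ∀ σ : Ordinal.{u} → Equiv.Perm (Cell L), (∀ η < Ordinal.omega0, σ η = Hseq L) →
      run σ (fSolved L) Ordinal.omega0 = fSolved L := by
    intro σ hσ
    rw [run_limit σ (fSolved L) Ordinal.isSuccLimit_omega0]
    funext c
    obtain ⟨v, hv⟩ := Option.ne_none_iff_exists'.mp (fSolved_ne_none c)
    rw [hv]
    apply eventualVal_const Ordinal.omega0_pos
    intro η hη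
    obtain ⟨n, rfl⟩ := Ordinal.lt_omega0.mp hη
    rw [key σ hσ n, hv]
  have keyω1 : ∀ σ : Ordinal.{u} → Equiv.Perm (Cell L), (∀ η < Ordinal.omega0, σ η = Hseq L) →
      σ Ordinal.omega0 = tauP a →
      run σ (fSolved L) (Ordinal.omega0 + 1) = fun c => fSolved L ((tauP a)⁻¹ c) := by
    intro σ hσ hτ
    rw [Ordinal.add_one_eq_succ, run_succ, hτ, keyω σ hσ]
  refine ⟨⟨Ordinal.omega0 + 1, fun η => if η < Ordinal.omega0 then Hseq L else tauP a, hb⟩,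
    ?_, ?_⟩
  · -- convergence of s over the solved configuration
    intro c
    show run (fun η => if η < Ordinal.omega0 then Hseq L else tauP a) (fSolved L)
      (Ordinal.omega0 + 1) c ≠ none
    rw [keyω1 _ (fun η hη => if_pos hη) (if_neg (lt_irrefl _))]
    exact fSolved_ne_none _
  · -- divergence of s ⌢ s
    intro hconv
    set σS : Ordinal.{u} → Equiv.Perm (Cell L) := fun η =>
      if η < Ordinal.omega0 + 1 then (if η < Ordinal.omega0 then Hseq L else tauP a)
      else (if η - (Ordinal.omega0 + 1) < Ordinal.omega0 then Hseq L else tauP a) with hσS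
    have hωlt : Ordinal.omega0 < Ordinal.omega0 + 1 := by
      rw [Ordinal.add_one_eq_succ]; exact Order.lt_succ _
    have hσS1 : ∀ η < Ordinal.omega0, σS η = Hseq L := by
      intro η hη
      rw [hσS]
      simp only
      rw [if_pos (hη.trans hωlt), if_pos hη]
    have hσSω : σS Ordinal.omega0 = tauP a := by
      rw [hσS]; simp only
      rw [if_pos hωlt, if_neg (lt_irrefl _)]
    have hσS2 : ∀ n : ℕ, σS (Ordinal.omega0 + 1 + (n : Ordinal)) = Hseq L := by
      intro n
      rw [hσS]; simp only
      rw [if_neg (not_lt.mpr le_self_add), Ordinal.add_sub_cancel,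
        if_pos (Ordinal.nat_lt_omega0 n)]
    have hσS3 : σS (Ordinal.omega0 + 1 + Ordinal.omega0) = tauP a := by
      rw [hσS]; simp only
      rw [if_neg (not_lt.mpr le_self_add), Ordinal.add_sub_cancel,
        if_neg (lt_irrefl _)]
    have par : ∀ n : ℕ,
        run σS (fSolved L) (Ordinal.omega0 + 1 + (n : Ordinal)) (cell0 a)
          = some (if n % 2 = 0 then Color.orange else Color.white) ∧
        run σS (fSolved L) (Ordinal.omega0 + 1 + (n : Ordinal)) (cell1 a)
          = some (if n % 2 = 0 then Color.white else Color.orange) := by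
      intro n
      induction n with
      | zero =>
        rw [Nat.cast_zero, add_zero, keyω1 σS hσS1 hσSω]
        constructor
        · show fSolved L ((tauP a)⁻¹ (cell0 a))
            = some (if 0 % 2 = 0 then Color.orange else Color.white)
          rw [fSolved_tauInv_cell0]
          norm_num
        · show fSolved L ((tauP a)⁻¹ (cell1 a))
            = some (if 0 % 2 = 0 then Color.white else Color.orange)
          rw [fSolved_tauInv_cell1]
          norm_num
      | succ n ih =>
        have h1 : (Ordinal.omega0 + 1 + ((n + 1 : ℕ) : Ordinal))
            = Order.succ (Ordinal.omega0 + 1 + (n : Ordinal)) := by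
          rw [Nat.cast_add, Nat.cast_one, ← add_assoc, Ordinal.add_one_eq_succ]
        rw [h1, run_succ, hσS2 n]
        constructor
        · show run σS (fSolved L) (Ordinal.omega0 + 1 + (n : Ordinal)) ((Hseq L)⁻¹ (cell0 a))
            = some (if (n + 1) % 2 = 0 then Color.orange else Color.white)
          rw [Hinv_cell0, ih.2]
          rcases Nat.mod_two_eq_zero_or_one n with h | h
          · rw [if_pos h, if_neg (by omega)]
          · rw [if_neg (by omega), if_pos (by omega)]
        · show run σS (fSolved L) (Ordinal.omega0 + 1 + (n : Ordinal)) ((Hseq L)⁻¹ (cell1 a))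
            = some (if (n + 1) % 2 = 0 then Color.white else Color.orange)
          rw [Hinv_cell1, ih.1]
          rcases Nat.mod_two_eq_zero_or_one n with h | h
          · rw [if_pos h, if_neg (by omega)]
          · rw [if_neg (by omega), if_pos (by omega)]
    have hlim : Order.IsSuccLimit (Ordinal.omega0 + 1 + Ordinal.omega0) :=
      Ordinal.isSuccLimit_add _ Ordinal.isSuccLimit_omega0
    have hnone : run σS (fSolved L) (Ordinal.omega0 + 1 + Ordinal.omega0) (cell0 a) = none := by
      rw [run_limit σS (fSolved L) hlim]
      show eventualVal _ (fun η _ => run σS (fSolved L) η (cell0 a)) = none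
      apply eventualVal_none
      intro v γ hγ
      obtain ⟨d, hd, hle⟩ := (Ordinal.lt_add_iff Ordinal.omega0_ne_zero).mp hγ
      obtain ⟨n, rfl⟩ := Ordinal.lt_omega0.mp hd
      by_cases hv : v = Color.orange
      · refine ⟨Ordinal.omega0 + 1 + ((2 * n + 1 : ℕ) : Ordinal), ?_, ?_, ?_⟩
        · exact (add_lt_add_iff_left _).mpr (Ordinal.nat_lt_omega0 _)
        · exact hle.trans ((add_le_add_iff_left _).mpr (by exact_mod_cast (by omega : n ≤ 2 * n + 1)))
        · rw [(par (2 * n + 1)).1, if_neg (by omega), hv]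
          simp
      · refine ⟨Ordinal.omega0 + 1 + ((2 * n : ℕ) : Ordinal), ?_, ?_, ?_⟩
        · exact (add_lt_add_iff_left _).mpr (Ordinal.nat_lt_omega0 _)
        · exact hle.trans ((add_le_add_iff_left _).mpr (by exact_mod_cast (by omega : n ≤ 2 * n)))
        · rw [(par (2 * n)).1, if_pos (by omega)]
          intro hcontra
          exact hv (Option.some_inj.mp hcontra).symm
    have hfin : (Ordinal.omega0 + 1) + (Ordinal.omega0 + 1)
        = Order.succ (Ordinal.omega0 + 1 + Ordinal.omega0) := by
      rw [← add_assoc, Ordinal.add_one_eq_succ]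
    have hterm : run σS (fSolved L) ((Ordinal.omega0 + 1) + (Ordinal.omega0 + 1))
        (tauP a (cell0 a)) = none := by
      rw [hfin, run_succ, hσS3]
      show run σS (fSolved L) (Ordinal.omega0 + 1 + Ordinal.omega0)
        ((tauP a)⁻¹ (tauP a (cell0 a))) = none
      rw [show (tauP a)⁻¹ (tauP a (cell0 a)) = cell0 a from (tauP a).symm_apply_apply _]
      exact hnone
    exact hconv (tauP a (cell0 a)) hterm
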